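/- Let m be an even probability measure on [0,1] and let x, y > 0 with x ≠ y. Then √(xy) ≤ ∫₀¹ x^s y^{1−s} dm(s), with equality if and only if m is the point mass δ_{1/2} at s = 1/2. -/

import Mathlib

open MeasureTheory

lemma cont_aux (x : ℝ) (hx : 0 < x) : Continuous fun s : ℝ => x ^ s := by
  have : (fun s : ℝ => x ^ s) = fun s => Real.exp (Real.log x * s) := by
    funext s; rw [Real.rpow_def_of_pos hx]
  rw [this]; continuity

lemma g_cont (x y : ℝ) (hx : 0 < x) (hy : 0 < y) :
    Continuous fun s : ℝ => x ^ s * y ^ (1 - s) :=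
  (cont_aux x hx).mul ((cont_aux y hy).comp (continuous_const.sub continuous_id))

lemma g_mul (x y : ℝ) (hx : 0 < x) (hy : 0 < y) (s : ℝ) :
    (x ^ s * y ^ (1 - s)) * (x ^ (1 - s) * y ^ (1 - (1 - s))) = x * y := by
  rw [show (1 - (1 - s)) = s by ring, mul_mul_mul_comm, ← Real.rpow_add hx,
    ← Real.rpow_add hy, show s + (1 - s) = 1 by ring, show (1 - s) + s = 1 by ring,
    Real.rpow_one, Real.rpow_one]

lemma key (x y : ℝ) (hx : 0 < x) (hy : 0 < y) (hxy : x ≠ y) (s : ℝ) :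
    2 * Real.sqrt (x * y) ≤ x ^ s * y ^ (1 - s) + x ^ (1 - s) * y ^ (1 - (1 - s)) ∧
    (x ^ s * y ^ (1 - s) + x ^ (1 - s) * y ^ (1 - (1 - s)) = 2 * Real.sqrt (x * y)
      ↔ s = 1 / 2) := by
  set a := x ^ s * y ^ (1 - s) with ha
  set b := x ^ (1 - s) * y ^ (1 - (1 - s)) with hb
  have hapos : 0 < a := mul_pos (Real.rpow_pos_of_pos hx _) (Real.rpow_pos_of_pos hy _)
  have hbpos : 0 < b := mul_pos (Real.rpow_pos_of_pos hx _) (Real.rpow_pos_of_pos hy _)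
  have hab : a * b = x * y := g_mul x y hx hy s
  have hs : Real.sqrt (x * y) = Real.sqrt a * Real.sqrt b := by
    rw [← hab, Real.sqrt_mul hapos.le]
  have hsq : (Real.sqrt a - Real.sqrt b) ^ 2 = a + b - 2 * Real.sqrt (x * y) := by
    rw [hs, sub_sq, Real.sq_sqrt hapos.le, Real.sq_sqrt hbpos.le]
    ring
  have hle : 2 * Real.sqrt (x * y) ≤ a + b := by nlinarith [sq_nonneg (Real.sqrt a - Real.sqrt b)]
  refine ⟨hle, ?_⟩
  have haeqb : a = b ↔ s = 1 / 2 := by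
    constructor
    · intro h
      have hla : Real.log a = Real.log b := by rw [h]
      rw [ha, hb, Real.log_mul (Real.rpow_pos_of_pos hx _).ne' (Real.rpow_pos_of_pos hy _).ne',
        Real.log_mul (Real.rpow_pos_of_pos hx _).ne' (Real.rpow_pos_of_pos hy _).ne',
        Real.log_rpow hx, Real.log_rpow hy, Real.log_rpow hx, Real.log_rpow hy] at hla
      have hlxy : Real.log x ≠ Real.log y := fun h' =>
        hxy (Real.log_injOn_pos (Set.mem_Ioi.mpr hx) (Set.mem_Ioi.mpr hy) h')
      have : (2 * s - 1) * (Real.log x - Real.log y) = 0 := by ring_nf; ring_nf at hla; linarith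
      rcases mul_eq_zero.mp this with h1 | h2
      · linarith
      · exact absurd (by linarith : Real.log x = Real.log y) hlxy
    · intro h
      rw [ha, hb, h]; norm_num
  constructor
  · intro h
    have hzero : (Real.sqrt a - Real.sqrt b) ^ 2 = 0 := by rw [hsq]; linarith
    have : Real.sqrt a = Real.sqrt b := by nlinarith [sq_nonneg (Real.sqrt a - Real.sqrt b)]
    have : a = b := by
      have := congrArg (fun t => t ^ 2) this
      simpa [Real.sq_sqrt hapos.le, Real.sq_sqrt hbpos.le] using this
    exact haeqb.mp this
  · intro h
    have hab' : a = b := haeqb.mpr h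
    have : Real.sqrt (x * y) = a := by
      rw [hs, ← hab', Real.mul_self_sqrt hapos.le]
    rw [← hab', ← this]; ring

/-- for an even probability measure `m` on `[0,1]` and `x ≠ y` positive,
`√(xy) ≤ ∫₀¹ x^s y^{1-s} dm(s)`, with equality iff `m` is the point mass at `1/2`. -/
theorem sqrt_le_weighted_mean (m : Measure ℝ) (hm : IsProbabilityMeasure m)
    (hsupp : m (Set.Icc (0:ℝ) 1)ᶜ = 0)
    (heven : m.map (fun s => 1 - s) = m)
    (x y : ℝ) (hx : 0 < x) (hy : 0 < y) (hxy : x ≠ y) :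
    Real.sqrt (x * y) ≤ (∫ s, x ^ s * y ^ (1 - s) ∂m) ∧
      ((∫ s, x ^ s * y ^ (1 - s) ∂m) = Real.sqrt (x * y) ↔ m = Measure.dirac (1/2)) := by
  set g : ℝ → ℝ := fun s => x ^ s * y ^ (1 - s) with hg
  have hgc : Continuous g := g_cont x y hx hy
  have hae : ∀ᵐ s ∂m, s ∈ Set.Icc (0:ℝ) 1 := by
    rw [MeasureTheory.ae_iff]
    convert hsupp using 2
    ext a; simp
  -- integrability of g
  have hbound : ∀ s ∈ Set.Icc (0:ℝ) 1, ‖g s‖ ≤ max x 1 * max y 1 := by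
    intro s hs
    obtain ⟨hs0, hs1⟩ := hs
    have h1 : x ^ s ≤ max x 1 := by
      rcases le_or_gt 1 x with h | h
      · calc x ^ s ≤ x ^ (1:ℝ) := Real.rpow_le_rpow_of_exponent_le h hs1
          _ = x := Real.rpow_one x
          _ ≤ max x 1 := le_max_left _ _
      · calc x ^ s ≤ x ^ (0:ℝ) := Real.rpow_le_rpow_of_exponent_ge hx h.le hs0
          _ = 1 := Real.rpow_zero x
          _ ≤ max x 1 := le_max_right _ _
    have h2 : y ^ (1 - s) ≤ max y 1 := by
      have h10 : (0:ℝ) ≤ 1 - s := by linarith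
      have h11 : 1 - s ≤ 1 := by linarith
      rcases le_or_gt 1 y with h | h
      · calc y ^ (1 - s) ≤ y ^ (1:ℝ) := Real.rpow_le_rpow_of_exponent_le h h11
          _ = y := Real.rpow_one y
          _ ≤ max y 1 := le_max_left _ _
      · calc y ^ (1 - s) ≤ y ^ (0:ℝ) := Real.rpow_le_rpow_of_exponent_ge hy h.le h10
          _ = 1 := Real.rpow_zero y
          _ ≤ max y 1 := le_max_right _ _
    have hgp : 0 < g s := mul_pos (Real.rpow_pos_of_pos hx _) (Real.rpow_pos_of_pos hy _)
    rw [Real.norm_eq_abs, abs_of_pos hgp]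
    exact mul_le_mul h1 h2 (Real.rpow_pos_of_pos hy _).le
      (le_trans hx.le (le_max_left _ _))
  have hint : Integrable g m := by
    refine Integrable.mono' (integrable_const (max x 1 * max y 1)) hgc.aestronglyMeasurable ?_
    filter_upwards [hae] with s hs using hbound s hs
  -- symmetry
  have hT : Measurable fun s : ℝ => 1 - s := (measurable_const.sub measurable_id)
  have hsym : (∫ s, g s ∂m) = ∫ s, g (1 - s) ∂m := by
    conv_lhs => rw [← heven]
    exact integral_map hT.aemeasurable (by rw [heven]; exact hgc.aestronglyMeasurable)
  have hintT : Integrable (fun s => g (1 - s)) m := by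
    have : Integrable g (m.map fun s => 1 - s) := by rwa [heven]
    exact (integrable_map_measure hgc.aestronglyMeasurable hT.aemeasurable).mp
      (by rwa [heven])
  -- main inequality
  set J := ∫ s, g s ∂m with hJ
  have htwo : 2 * J = ∫ s, (g s + g (1 - s)) ∂m := by
    rw [integral_add hint hintT, ← hsym]; ring
  have hconst : (∫ _ : ℝ, 2 * Real.sqrt (x * y) ∂m) = 2 * Real.sqrt (x * y) := by
    simp [measure_univ]
  have hkey1 : ∀ s : ℝ, 2 * Real.sqrt (x * y) ≤ g s + g (1 - s) := fun s =>
    (key x y hx hy hxy s).1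
  have hkey2 : ∀ s : ℝ, g s + g (1 - s) = 2 * Real.sqrt (x * y) → s = 1 / 2 := fun s h =>
    ((key x y hx hy hxy s).2).mp h
  have hsumint : Integrable (fun s => g s + g (1 - s)) m := hint.add hintT
  have hmono : 2 * Real.sqrt (x * y) ≤ 2 * J := by
    rw [htwo, ← hconst]
    exact integral_mono (integrable_const _) hsumint hkey1
  have hle : Real.sqrt (x * y) ≤ J := by linarith
  refine ⟨hle, ?_, ?_⟩
  · -- equality implies dirac
    intro hEq
    have hzero : (∫ s, (g s + g (1 - s) - 2 * Real.sqrt (x * y)) ∂m) = 0 := by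
      rw [integral_sub hsumint (integrable_const _), ← htwo, hconst, hEq]
      ring
    have hnn : 0 ≤ fun s => g s + g (1 - s) - 2 * Real.sqrt (x * y) := by
      intro s; simp only [Pi.zero_apply]
      have := hkey1 s
      linarith
    have hintd : Integrable (fun s => g s + g (1 - s) - 2 * Real.sqrt (x * y)) m :=
      hsumint.sub (integrable_const _)
    have haez := (integral_eq_zero_iff_of_nonneg hnn hintd).mp hzero
    have haehalf : ∀ᵐ s ∂m, s = 1 / 2 := by
      filter_upwards [haez] with s hs
      have : g s + g (1 - s) = 2 * Real.sqrt (x * y) := by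
        have : g s + g (1 - s) - 2 * Real.sqrt (x * y) = 0 := hs
        linarith
      exact hkey2 s this
    have hcompl : m ({(1/2 : ℝ)}ᶜ) = 0 := by
      have := MeasureTheory.ae_iff.mp haehalf
      convert this using 2
      ext a; simp
    have hone : m {(1/2 : ℝ)} = 1 := by
      have := measure_add_measure_compl (μ := m) (measurableSet_singleton (1/2 : ℝ))
      rw [hcompl, add_zero, measure_univ] at this
      exact this
    ext U hU
    rw [Measure.dirac_apply' _ hU]
    by_cases hmem : (1/2 : ℝ) ∈ U
    · have h1 : m {(1/2 : ℝ)} ≤ m U := measure_mono (Set.singleton_subset_iff.mpr hmem)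
      have h2 : m U ≤ 1 := prob_le_one
      rw [hone] at h1
      rw [le_antisymm h2 h1]
      have hmem' : (2:ℝ)⁻¹ ∈ U := by rwa [show ((2:ℝ)⁻¹) = 1/2 by norm_num]
      simp [Set.indicator_of_mem hmem']
    · have : U ⊆ {(1/2 : ℝ)}ᶜ := fun z hz => fun h => hmem (h ▸ hz)
      have := measure_mono_null this hcompl
      rw [this]
      have hmem' : (2:ℝ)⁻¹ ∉ U := by rwa [show ((2:ℝ)⁻¹) = 1/2 by norm_num]
      simp [Set.indicator_of_notMem hmem']
  · -- dirac implies equality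
    intro hEq
    rw [hJ, hEq, integral_dirac]
    rw [hg]
    simp only
    rw [show (1 : ℝ) - 1/2 = 1/2 by norm_num, Real.sqrt_eq_rpow,
      Real.mul_rpow hx.le hy.le]
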